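/- Let N ≥ 1, 0 < 2s < N, m > m_c := 2 - 2s/N. Suppose there exists a constant C* (the Hardy-Littlewood-Sobolev constant) such that for all nonnegative ρ ∈ L¹(ℝ^N) ∩ L^{m_c}(ℝ^N), ∬ |x-y|^{2s-N} ρ(x)ρ(y) dx dy ≤ C* ‖ρ‖_{L¹}^{2s/N} ‖ρ‖_{L^{m_c}}^{m_c}. If ρ ∈ Y_M satisfies the virial identity (χ/2)∬ c_{N,s}|x-y|^{2s-N}ρ(x)ρ(y) = (N/(N-2s))∫ρ^m, then ‖ρ‖_{L^m}^m ≤ Q M^{((m-2)N+2sm)/((m-2)N+2s)}, where Q depends only on χ, s, m, N. -/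

import Mathlib

open MeasureTheory Real Filter Set

noncomputable section

/-- The Riesz kernel normalization constant `c_{N,s} = Γ(N/2-s)/(π^{N/2} 4^s Γ(s))`. -/
def rieszConst (N : ℕ) (s : ℝ) : ℝ :=
  Real.Gamma ((N : ℝ) / 2 - s) / (Real.pi ^ ((N : ℝ) / 2) * (4 : ℝ) ^ s * Real.Gamma s)

/-- The class `Y_M` of nonnegative `L¹ ∩ L^m` densities of mass `M` with zero
center of mass. -/
def Ymass (N : ℕ) (m M : ℝ) : Set (EuclideanSpace ℝ (Fin N) → ℝ) :=
  {ρ | (∀ x, 0 ≤ ρ x) ∧ Integrable ρ ∧ MemLp ρ (ENNReal.ofReal m) ∧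
    (∫ x, ρ x) = M ∧ (∫ x : EuclideanSpace ℝ (Fin N), ρ x • x) = 0}

/-- The free energy functional
`F[ρ] = (1/(m-1)) ∫ ρ^m - (χ/2) ∬ c_{N,s} |x-y|^{2s-N} ρ(x) ρ(y)`. -/
def freeEnergy (N : ℕ) (s m χ : ℝ) (ρ : EuclideanSpace ℝ (Fin N) → ℝ) : ℝ :=
  1 / (m - 1) * (∫ x, ρ x ^ m) -
    χ / 2 * ∫ x : EuclideanSpace ℝ (Fin N), ∫ y : EuclideanSpace ℝ (Fin N),
      rieszConst N s * ‖x - y‖ ^ (2 * s - (N : ℝ)) * ρ x * ρ y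

open scoped ENNReal NNReal in
lemma my_interp {α : Type*} [MeasurableSpace α] (μ : Measure α) (ρ : α → ℝ)
    (hρ0 : ∀ x, 0 ≤ ρ x) (hρint : Integrable ρ μ) {m mc t : ℝ} (hm1 : 1 < m)
    (hρm : MemLp ρ (ENNReal.ofReal m) μ) (ht0 : 0 < t) (ht1 : t < 1)
    (hmc : mc = (1 - t) + t * m) :
    MemLp ρ (ENNReal.ofReal mc) μ ∧
    (∫ x, ρ x ^ mc ∂μ) ≤ (∫ x, ρ x ∂μ) ^ (1 - t) * (∫ x, ρ x ^ m ∂μ) ^ t := by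
  have hmc0 : 0 < mc := by nlinarith
  have hm0 : 0 < m := by linarith
  set f : α → ℝ≥0∞ := fun x => (‖ρ x‖₊ : ℝ≥0∞) with hf
  have hfx : ∀ x, f x = ENNReal.ofReal (ρ x) := fun x => by
    simp [hf, ← enorm_eq_nnnorm, Real.enorm_eq_ofReal (hρ0 x)]
  have hfm : AEMeasurable f μ := hρint.aestronglyMeasurable.enorm
  have hint_eq : ∀ q : ℝ, 0 < q →
      (∫ x, ρ x ^ q ∂μ) = (∫⁻ x, f x ^ q ∂μ).toReal := by
    intro q hq
    rw [integral_eq_lintegral_of_nonneg_ae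
      (Eventually.of_forall fun x => Real.rpow_nonneg (hρ0 x) q)
      ((hρint.aestronglyMeasurable.aemeasurable.pow aemeasurable_const).aestronglyMeasurable)]
    congr 1
    apply lintegral_congr
    intro x
    rw [hfx, ← ENNReal.ofReal_rpow_of_nonneg (hρ0 x) hq.le]
  have hint1 : (∫ x, ρ x ∂μ) = (∫⁻ x, f x ∂μ).toReal := by
    rw [integral_eq_lintegral_of_nonneg_ae (Eventually.of_forall hρ0)
      hρint.aestronglyMeasurable]
    congr 1; exact lintegral_congr fun x => (hfx x).symm
  have hL1 : (∫⁻ x, f x ∂μ) < ∞ := hρint.2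
  have hLm : (∫⁻ x, f x ^ m ∂μ) < ∞ := by
    have h2 := hρm.2
    rw [eLpNorm_eq_lintegral_rpow_enorm_toReal (by simp [hm0] : ENNReal.ofReal m ≠ 0)
      ENNReal.ofReal_ne_top, ENNReal.toReal_ofReal hm0.le] at h2
    have := (ENNReal.rpow_lt_top_iff_of_pos (by positivity : (0:ℝ) < 1/m)).1 h2
    simpa [hf, enorm_eq_nnnorm] using this
  have ht1' : (0:ℝ) < 1 - t := by linarith
  have hkey : (∫⁻ x, f x ^ mc ∂μ) ≤
      (∫⁻ x, f x ∂μ) ^ (1 - t) * (∫⁻ x, f x ^ m ∂μ) ^ t := by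
    have hpq : Real.HolderConjugate (1/(1-t)) (1/t) := by
      constructor
      · rw [one_div, one_div, inv_inv, inv_inv]; ring
      · exact one_div_pos.2 ht1'
      · exact one_div_pos.2 ht0
    have H := ENNReal.lintegral_mul_le_Lp_mul_Lq μ hpq
      (f := fun x => f x ^ (1-t)) (g := fun x => f x ^ (t*m))
      (hfm.pow aemeasurable_const) (hfm.pow aemeasurable_const)
    have e1 : ∀ x, (f x ^ (1-t)) ^ (1/(1-t)) = f x := fun x => by
      rw [← ENNReal.rpow_mul, mul_one_div, div_self ht1'.ne', ENNReal.rpow_one]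
    have e2 : ∀ x, (f x ^ (t*m)) ^ (1/t) = f x ^ m := fun x => by
      rw [← ENNReal.rpow_mul]; congr 1; field_simp
    calc (∫⁻ x, f x ^ mc ∂μ) = ∫⁻ x, (f x ^ (1-t)) * (f x ^ (t*m)) ∂μ := by
          apply lintegral_congr; intro x
          rw [← ENNReal.rpow_add_of_nonneg _ _ ht1'.le (by positivity), ← hmc]
      _ ≤ (∫⁻ x, (f x ^ (1-t)) ^ (1/(1-t)) ∂μ) ^ (1/(1/(1-t))) *
          (∫⁻ x, (f x ^ (t*m)) ^ (1/t) ∂μ) ^ (1/(1/t)) := H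
      _ = (∫⁻ x, f x ∂μ) ^ (1 - t) * (∫⁻ x, f x ^ m ∂μ) ^ t := by
          simp_rw [e1, e2, one_div_one_div]
  have hfin : (∫⁻ x, f x ^ mc ∂μ) < ∞ :=
    lt_of_le_of_lt hkey (ENNReal.mul_lt_top
      (ENNReal.rpow_lt_top_of_nonneg ht1'.le hL1.ne)
      (ENNReal.rpow_lt_top_of_nonneg ht0.le hLm.ne))
  constructor
  · refine ⟨hρint.aestronglyMeasurable, ?_⟩
    rw [eLpNorm_eq_lintegral_rpow_enorm_toReal (by simp [hmc0] : ENNReal.ofReal mc ≠ 0)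
      ENNReal.ofReal_ne_top, ENNReal.toReal_ofReal hmc0.le]
    exact ENNReal.rpow_lt_top_of_nonneg (by positivity) (by simpa [hf, enorm_eq_nnnorm] using hfin.ne)
  · rw [hint_eq mc hmc0, hint_eq m hm0, hint1, ENNReal.toReal_rpow, ENNReal.toReal_rpow,
      ← ENNReal.toReal_mul]
    exact ENNReal.toReal_mono (ENNReal.mul_ne_top
      (ENNReal.rpow_lt_top_of_nonneg ht1'.le hL1.ne).ne
      (ENNReal.rpow_lt_top_of_nonneg ht0.le hLm.ne).ne) hkey


/-- Basic estimate: under the Hardy–Littlewood–Sobolev inequality with constant `C*`,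
any `ρ ∈ Y_M` satisfying the virial identity obeys
`‖ρ‖_{L^m}^m ≤ Q M^{((m-2)N+2sm)/((m-2)N+2s)}` with `Q = Q(χ,s,m,N)`. -/
theorem stmt6 (N : ℕ) (s m χ : ℝ) (hN : 1 ≤ N) (hs0 : 0 < s) (hsN : 2 * s < N)
    (hm : 2 - 2 * s / N < m) (hχ : 0 < χ)
    (Cstar : ℝ)
    (hHLS : ∀ ρ : EuclideanSpace ℝ (Fin N) → ℝ, (∀ x, 0 ≤ ρ x) → Integrable ρ →
      MemLp ρ (ENNReal.ofReal (2 - 2 * s / N)) →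
      (∫ x : EuclideanSpace ℝ (Fin N), ∫ y : EuclideanSpace ℝ (Fin N),
          ‖x - y‖ ^ (2 * s - (N : ℝ)) * ρ x * ρ y)
        ≤ Cstar * (∫ x, ρ x) ^ (2 * s / N) * ∫ x, ρ x ^ (2 - 2 * s / N)) :
    ∃ Q > 0, ∀ M > 0, ∀ ρ ∈ Ymass N m M,
      χ / 2 * (∫ x : EuclideanSpace ℝ (Fin N), ∫ y : EuclideanSpace ℝ (Fin N),
          rieszConst N s * ‖x - y‖ ^ (2 * s - (N : ℝ)) * ρ x * ρ y)
        = (N : ℝ) / ((N : ℝ) - 2 * s) * (∫ x, ρ x ^ m) →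
      (∫ x, ρ x ^ m)
        ≤ Q * M ^ (((m - 2) * (N : ℝ) + 2 * s * m) / ((m - 2) * (N : ℝ) + 2 * s)) := by
  have hN0 : (0:ℝ) < N := by exact_mod_cast Nat.lt_of_lt_of_le Nat.zero_lt_one hN
  set mc := 2 - 2 * s / (N:ℝ) with hmcdef
  have hmc1 : 1 < mc := by
    have : 2 * s / (N:ℝ) < 1 := (div_lt_one hN0).2 hsN
    rw [hmcdef]; linarith
  have hm1 : 1 < m := lt_trans hmc1 hm
  set t := (mc - 1) / (m - 1) with htdef
  have ht0 : 0 < t := div_pos (by linarith) (by linarith)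
  have ht1 : t < 1 := (div_lt_one (by linarith)).2 (by linarith)
  have ht1' : (0:ℝ) < 1 - t := by linarith
  have hm1ne : m - 1 ≠ 0 := by linarith
  have hmceq : mc = (1 - t) + t * m := by
    rw [htdef]; field_simp; ring
  have hNs : 0 < (N:ℝ) - 2 * s := by linarith
  have hc : 0 < rieszConst N s := by
    unfold rieszConst
    apply div_pos (Real.Gamma_pos_of_pos (by linarith))
    exact mul_pos (mul_pos (Real.rpow_pos_of_pos Real.pi_pos _)
      (Real.rpow_pos_of_pos (by norm_num) _)) (Real.Gamma_pos_of_pos hs0)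
  set K0 := ((N:ℝ) - 2 * s) / N * (χ / 2) * rieszConst N s with hK0def
  have hK0 : 0 < K0 := by
    rw [hK0def]; exact mul_pos (mul_pos (div_pos hNs hN0) (by linarith)) hc
  have hden : 0 < (m - 2) * (N:ℝ) + 2 * s := by
    have h1 : 0 < (m - mc) * (N:ℝ) := mul_pos (by linarith) hN0
    have h2 : (m - mc) * (N:ℝ) = (m - 2) * (N:ℝ) + 2 * s := by
      rw [hmcdef]; field_simp; ring
    linarith
  have hE' : (2 * s / (N:ℝ) + (1 - t))
      = (((m - 2) * (N:ℝ) + 2 * s * m) / ((m - 2) * (N:ℝ) + 2 * s)) * (1 - t) := by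
    rw [htdef, hmcdef, div_mul_eq_mul_div, eq_div_iff hden.ne']
    field_simp
    ring
  have hE : (2 * s / (N:ℝ) + (1 - t)) * (1 / (1 - t))
      = ((m - 2) * (N:ℝ) + 2 * s * m) / ((m - 2) * (N:ℝ) + 2 * s) := by
    rw [hE', mul_one_div, mul_div_assoc, div_self ht1'.ne', mul_one]
  refine ⟨max ((K0 * Cstar) ^ (1 / (1 - t))) 1, lt_of_lt_of_le one_pos (le_max_right _ _), ?_⟩
  intro M hM ρ hρY hvir
  obtain ⟨hρ0, hρint, hρmem, hρM, -⟩ := hρY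
  obtain ⟨hmemmc, hinterp⟩ := my_interp volume ρ hρ0 hρint hm1 hρmem ht0 ht1 hmceq
  rw [hρM] at hinterp
  set A := ∫ x, ρ x ^ m with hAdef
  set B := ∫ x, ρ x ^ mc with hBdef
  have hA0 : 0 ≤ A := integral_nonneg fun x => Real.rpow_nonneg (hρ0 x) m
  have hB0 : 0 ≤ B := integral_nonneg fun x => Real.rpow_nonneg (hρ0 x) mc
  set I' := ∫ x : EuclideanSpace ℝ (Fin N), ∫ y : EuclideanSpace ℝ (Fin N),
      ‖x - y‖ ^ (2 * s - (N:ℝ)) * ρ x * ρ y with hI'def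
  have hDI : (∫ x : EuclideanSpace ℝ (Fin N), ∫ y : EuclideanSpace ℝ (Fin N),
      rieszConst N s * ‖x - y‖ ^ (2 * s - (N:ℝ)) * ρ x * ρ y) = rieszConst N s * I' := by
    rw [hI'def]; simp_rw [mul_assoc, integral_const_mul]
  rw [hDI] at hvir
  have hAK : A = K0 * I' := by
    have h2 : ((N:ℝ) - 2 * s) * (χ / 2 * (rieszConst N s * I')) = (N:ℝ) * A := by
      rw [hvir]; field_simp
    rw [hK0def]; field_simp; linarith
  have hI := hHLS ρ hρ0 hρint hmemmc
  rw [hρM] at hI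
  have hMα : 0 < M ^ (2 * s / (N:ℝ)) := Real.rpow_pos_of_pos hM _
  have hA_le : A ≤ K0 * (Cstar * M ^ (2 * s / (N:ℝ)) * B) := by
    rw [hAK]
    exact mul_le_mul_of_nonneg_left (by rw [hBdef]; linarith [hI]) hK0.le
  rcases hA0.eq_or_lt with hAz | hApos
  · rw [← hAz]
    positivity
  · have hCpos : 0 < Cstar := by
      by_contra hC
      push_neg at hC
      have h1 : Cstar * M ^ (2 * s / (N:ℝ)) * B ≤ 0 :=
        mul_nonpos_of_nonpos_of_nonneg (mul_nonpos_of_nonpos_of_nonneg hC hMα.le) hB0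
      have h2 : K0 * (Cstar * M ^ (2 * s / (N:ℝ)) * B) ≤ 0 :=
        mul_nonpos_of_nonneg_of_nonpos hK0.le h1
      linarith
    have h3 : A ≤ K0 * Cstar * M ^ (2 * s / (N:ℝ) + (1 - t)) * A ^ t := by
      calc A ≤ K0 * (Cstar * M ^ (2 * s / (N:ℝ)) * B) := hA_le
        _ ≤ K0 * (Cstar * M ^ (2 * s / (N:ℝ)) * (M ^ (1 - t) * A ^ t)) := by
            refine mul_le_mul_of_nonneg_left (mul_le_mul_of_nonneg_left hinterp ?_) hK0.le
            exact mul_nonneg hCpos.le hMα.le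
        _ = K0 * Cstar * (M ^ (2 * s / (N:ℝ)) * M ^ (1 - t)) * A ^ t := by ring
        _ = K0 * Cstar * M ^ (2 * s / (N:ℝ) + (1 - t)) * A ^ t := by
            rw [← Real.rpow_add hM]
    have hAt : 0 < A ^ t := Real.rpow_pos_of_pos hApos _
    have h4 : A ^ (1 - t) ≤ K0 * Cstar * M ^ (2 * s / (N:ℝ) + (1 - t)) := by
      rw [← mul_le_mul_iff_left₀ hAt]
      calc A ^ (1 - t) * A ^ t = A := by
            rw [← Real.rpow_add hApos]; norm_num
        _ ≤ _ := h3
    have h5 : A ≤ (K0 * Cstar * M ^ (2 * s / (N:ℝ) + (1 - t))) ^ (1 / (1 - t)) := by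
      have hid : A = (A ^ (1 - t)) ^ (1 / (1 - t)) := by
        rw [← Real.rpow_mul hApos.le, mul_one_div, div_self ht1'.ne', Real.rpow_one]
      rw [hid]
      exact Real.rpow_le_rpow (Real.rpow_nonneg hApos.le _) h4 (by positivity)
    have h6 : (K0 * Cstar * M ^ (2 * s / (N:ℝ) + (1 - t))) ^ (1 / (1 - t))
        = (K0 * Cstar) ^ (1 / (1 - t)) *
          M ^ (((m - 2) * (N:ℝ) + 2 * s * m) / ((m - 2) * (N:ℝ) + 2 * s)) := by
      rw [Real.mul_rpow (by positivity) (Real.rpow_nonneg hM.le _),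
        ← Real.rpow_mul hM.le, hE]
    rw [h6] at h5
    calc A ≤ (K0 * Cstar) ^ (1 / (1 - t)) *
          M ^ (((m - 2) * (N:ℝ) + 2 * s * m) / ((m - 2) * (N:ℝ) + 2 * s)) := h5
      _ ≤ _ := mul_le_mul_of_nonneg_right (le_max_left _ _) (Real.rpow_nonneg hM.le _)
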